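/- For n ≥ 3 and k ≥ 2, the rank of the direct power (S_n)^k equals k. -/

import Mathlib

open Subgroup

/-- Minimal length of a word over `X` (positive letters only) representing `g`. -/
noncomputable def wLen {G : Type*} [Group G] (X : Set G) (g : G) : ℕ :=
  sInf {n | ∃ l : List G, (∀ x ∈ l, x ∈ X) ∧ l.length = n ∧ l.prod = g}

/-- Minimal length of a word over `X ∪ X⁻¹` representing `g`. -/
noncomputable def sLen {G : Type*} [Group G] (X : Set G) (g : G) : ℕ :=
  sInf {n | ∃ l : List G, (∀ x ∈ l, x ∈ X ∨ x⁻¹ ∈ X) ∧ l.length = n ∧ l.prod = g}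

/-- Diameter of `G` with respect to `X` (positive words). -/
noncomputable def diamW (G : Type*) [Group G] (X : Set G) : ℕ :=
  sSup (Set.range (wLen X))

/-- Symmetric diameter of `G` with respect to `X`. -/
noncomputable def diamS (G : Type*) [Group G] (X : Set G) : ℕ :=
  sSup (Set.range (sLen X))

/-- Maximum diameter over all generating sets. -/
noncomputable def DW (G : Type*) [Group G] : ℕ :=
  sSup {d | ∃ X : Set G, Subgroup.closure X = ⊤ ∧ d = diamW G X}

/-- Maximum symmetric diameter over all generating sets. -/
noncomputable def DS (G : Type*) [Group G] : ℕ :=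
  sSup {d | ∃ X : Set G, Subgroup.closure X = ⊤ ∧ d = diamS G X}

/-- Minimal size of a generating set of `G`. -/
noncomputable def rk (G : Type*) [Group G] : ℕ :=
  sInf {n | ∃ S : Finset G, S.card = n ∧ Subgroup.closure (S : Set G) = ⊤}


namespace Stmt8Aux
open Equiv Equiv.Perm

def theta2 : ℤˣ →* Multiplicative (ZMod 2) where
  toFun u := Multiplicative.ofAdd (if u = 1 then 0 else 1)
  map_one' := by simp
  map_mul' a b := by
    rcases Int.units_eq_one_or a with rfl | rfl <;>
      rcases Int.units_eq_one_or b with rfl | rfl <;> decide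

lemma theta2_surj : Function.Surjective theta2 := by intro v; revert v; decide

variable {n k : ℕ}

/-- the sign-vector morphism -/
def Phi (n k : ℕ) : (Fin k → Equiv.Perm (Fin n)) →* Multiplicative (Fin k → ZMod 2) :=
  (MulEquiv.piMultiplicative (fun _ : Fin k => ZMod 2)).toMonoidHom.comp
    (MonoidHom.mk' (fun g => fun i => theta2 (Equiv.Perm.sign (g i)))
      (by intro a b; funext i; simp only [Pi.mul_apply, map_mul]; rfl))

lemma Phi_surj (hn : 3 ≤ n) : Function.Surjective (Phi n k) := by
  have hnt : Nontrivial (Fin n) := by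
    refine ⟨⟨0, by omega⟩, ⟨1, by omega⟩, by simp [Fin.ext_iff]⟩
  intro v
  have : ∀ i, ∃ g : Equiv.Perm (Fin n), theta2 (Equiv.Perm.sign g) = Multiplicative.ofAdd (v.toAdd i) := by
    intro i
    obtain ⟨u, hu⟩ := theta2_surj (Multiplicative.ofAdd (v.toAdd i))
    obtain ⟨g, hg⟩ := Equiv.Perm.sign_surjective (Fin n) u
    exact ⟨g, by rw [hg, hu]⟩
  choose g hg using this
  refine ⟨g, Multiplicative.toAdd.injective ?_⟩
  funext i
  exact congrArg Multiplicative.toAdd (hg i)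

lemma lower_bound (hn : 3 ≤ n) (S : Finset (Fin k → Equiv.Perm (Fin n)))
    (hS : Subgroup.closure (S : Set (Fin k → Equiv.Perm (Fin n))) = ⊤) : k ≤ S.card := by
  classical
  set T : Set (Multiplicative (Fin k → ZMod 2)) := (Phi n k) '' S with hT
  have hclT : Subgroup.closure T = ⊤ := by
    rw [hT, ← MonoidHom.map_closure, hS, ← MonoidHom.range_eq_map,
      MonoidHom.range_eq_top]
    exact Phi_surj hn
  -- span of toAdd '' T is everything
  have hspan : Submodule.span (ZMod 2) (Multiplicative.toAdd '' T) = ⊤ := by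
    rw [eq_top_iff]
    rintro v -
    have hv : (Multiplicative.ofAdd v) ∈ Subgroup.closure T := by rw [hclT]; trivial
    refine Subgroup.closure_induction
      (p := fun g _ => g.toAdd ∈ Submodule.span (ZMod 2) (Multiplicative.toAdd '' T))
      (fun x hx => Submodule.subset_span ⟨x, hx, rfl⟩) (by simp)
      (fun a b _ _ ha hb => by exact Submodule.add_mem _ ha hb)
      (fun a _ ha => by exact Submodule.neg_mem _ ha) hv
  -- use finrank
  have hrank : Module.finrank (ZMod 2) (Fin k → ZMod 2) = k := by
    simp [Module.finrank_pi]
  have : Module.finrank (ZMod 2) (Fin k → ZMod 2) ≤ Fintype.card {x // x ∈ S} := by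
    refine finrank_le_of_span_eq_top (v := fun s : {x // x ∈ S} => ((Phi n k) s.1).toAdd) ?_
    convert hspan using 2
    ext v
    constructor
    · rintro ⟨s, rfl⟩; exact ⟨Phi n k s.1, ⟨s.1, s.2, rfl⟩, rfl⟩
    · rintro ⟨m, ⟨s, hs, rfl⟩, rfl⟩; exact ⟨⟨s, hs⟩, rfl⟩
  rwa [hrank, Fintype.card_coe] at this

private lemma prod_ite_units {k : ℕ} (j : Fin k) :
    ∀ L : List (Fin k), L.Nodup →
      (L.map (fun i => if j = i then (-1 : ℤˣ) else 1)).prod = if j ∈ L then -1 else 1 := by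
  intro L
  induction L with
  | nil => simp
  | cons a L ih =>
    intro hnd
    rcases List.nodup_cons.1 hnd with ⟨ha, hnd'⟩
    rw [List.map_cons, List.prod_cons, ih hnd']
    by_cases hja : j = a
    · subst hja
      simp [ha]
    · simp [hja, List.mem_cons]

variable {α : Type*} [DecidableEq α] [Fintype α] {k : ℕ}

/-- the generators -/
def xgen (k : ℕ) (u τ : Equiv.Perm α) : Fin k → (Fin k → Equiv.Perm α) :=
  fun i j => if j = i then τ else u

theorem gen_top (hk : 2 ≤ k) (u τ : Equiv.Perm α)
    (hgen : Subgroup.closure ({u, τ} : Set (Equiv.Perm α)) = ⊤)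
    (hτ2 : τ * τ = 1) (hsτ : Equiv.Perm.sign τ = -1) (hsu : Equiv.Perm.sign u = 1)
    (h3 : Equiv.Perm.IsThreeCycle (τ * u ^ 2 * τ⁻¹ * (u ^ 2)⁻¹)) :
    Subgroup.closure (Set.range (xgen k u τ)) = ⊤ := by
  classical
  have hnt : Nontrivial (Fin k) := Fin.nontrivial_iff_two_le.mpr hk
  set x := xgen k u τ with hx
  have xval_same : ∀ i, x i i = τ := fun i => if_pos rfl
  have xval_ne : ∀ i l, l ≠ i → x i l = u := fun i l h => if_neg h
  set H := Subgroup.closure (Set.range x) with hH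
  have hxmem : ∀ i, x i ∈ H := fun i => Subgroup.subset_closure ⟨i, rfl⟩
  have hτpow : τ ^ 2 = 1 := by rw [pow_two, hτ2]
  -- Step 1 : projection surjectivity
  have step1 : ∀ (j : Fin k) (g : Equiv.Perm α), ∃ h ∈ H, h j = g := by
    intro j g
    have hmap : (⊤ : Subgroup (Equiv.Perm α)) ≤ H.map (Pi.evalMonoidHom _ j) := by
      rw [← hgen, Subgroup.closure_le]
      rintro s (rfl | rfl)
      · obtain ⟨i, hij⟩ := exists_ne j
        exact ⟨x i, hxmem i, xval_ne i j (Ne.symm hij)⟩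
      · exact ⟨x j, hxmem j, xval_same j⟩
    obtain ⟨h, hh, hhj⟩ := hmap (Subgroup.mem_top g)
    exact ⟨h, hh, hhj⟩
  set w := τ * u ^ 2 * τ⁻¹ * (u ^ 2)⁻¹ with hw
  -- Step 2 : single w in H
  have step2 : ∀ j : Fin k, Pi.mulSingle j w ∈ H := by
    intro j
    obtain ⟨i, hij⟩ := exists_ne j
    have key : Pi.mulSingle j w = x j * (x i) ^ 2 * (x j)⁻¹ * ((x i) ^ 2)⁻¹ := by
      funext l
      simp only [Pi.mul_apply, Pi.pow_apply, Pi.inv_apply]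
      by_cases hlj : l = j
      · subst hlj
        rw [Pi.mulSingle_eq_same, xval_same, xval_ne i l (Ne.symm hij)]
      · rw [Pi.mulSingle_eq_of_ne hlj, xval_ne j l hlj]
        by_cases hli : l = i
        · subst hli
          rw [xval_same, hτpow]
          group
        · rw [xval_ne i l hli]
          group
    rw [key]
    exact H.mul_mem (H.mul_mem (H.mul_mem (hxmem j) (H.pow_mem (hxmem i) 2))
      (H.inv_mem (hxmem j))) (H.inv_mem (H.pow_mem (hxmem i) 2))
  -- Step 3 : conjugates
  have step3 : ∀ (j : Fin k) (c : Equiv.Perm α), Pi.mulSingle j (c * w * c⁻¹) ∈ H := by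
    intro j c
    obtain ⟨h, hh, hhj⟩ := step1 j c
    have key : Pi.mulSingle j (c * w * c⁻¹) = h * Pi.mulSingle j w * h⁻¹ := by
      funext l
      by_cases hlj : l = j
      · subst hlj
        simp only [Pi.mul_apply, Pi.inv_apply, Pi.mulSingle_eq_same, hhj]
      · simp only [Pi.mul_apply, Pi.inv_apply, Pi.mulSingle_eq_of_ne hlj]
        group
    rw [key]
    exact H.mul_mem (H.mul_mem hh (step2 j)) (H.inv_mem hh)
  -- Step 4 : alternating in each coordinate
  have step4 : ∀ (j : Fin k) (a : Equiv.Perm α), Equiv.Perm.sign a = 1 →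
      Pi.mulSingle j a ∈ H := by
    intro j a ha
    have hmem : a ∈ alternatingGroup α := Equiv.Perm.mem_alternatingGroup.2 ha
    have hle : alternatingGroup α ≤ H.comap (MonoidHom.mulSingle _ j) := by
      rw [← closure_three_cycles_eq_alternating, Subgroup.closure_le]
      intro σ hσ
      have hconj : IsConj w σ := isConj_of_cycleType_eq (h3.trans hσ.symm)
      rw [isConj_iff] at hconj
      obtain ⟨c, hc⟩ := hconj
      have hmem' : Pi.mulSingle j σ ∈ H := by rw [← hc]; exact step3 j c
      exact hmem'
    exact hle hmem
  -- Step 5 : everything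
  rw [eq_top_iff]
  rintro g -
  set F : Finset (Fin k) := Finset.univ.filter (fun i => Equiv.Perm.sign (g i) = -1) with hF
  set L : List (Fin k) := F.toList with hL
  set p : Fin k → Equiv.Perm α := (L.map x).prod with hp
  have hpH : p ∈ H := by
    apply Subgroup.list_prod_mem
    intro q hq
    rcases List.mem_map.1 hq with ⟨i, _, rfl⟩
    exact hxmem i
  have hpj : ∀ j, Equiv.Perm.sign (p j) = if j ∈ F then -1 else 1 := by
    intro j
    have h1 : p j = (L.map (fun i => x i j)).prod := by
      rw [hp]
      exact (map_list_prod (Pi.evalMonoidHom (fun _ => Equiv.Perm α) j) (L.map x)).trans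
        (by rw [List.map_map]; rfl)
    have h2 : (L.map (fun i => x i j)).map Equiv.Perm.sign
        = L.map (fun i => if j = i then (-1 : ℤˣ) else 1) := by
      rw [List.map_map]
      apply List.map_congr_left
      intro i _
      by_cases hji : j = i
      · subst hji; simp [xval_same, hsτ]
      · simp [xval_ne i j hji, hsu, hji]
    rw [h1, map_list_prod, h2, prod_ite_units j L (Finset.nodup_toList F)]
    simp [hL, Finset.mem_toList]
  have hq : g * p⁻¹ ∈ H := by
    apply Subgroup.pi_mem_of_mulSingle_mem
    intro j
    apply step4
    rw [Pi.mul_apply, Pi.inv_apply, map_mul, map_inv, hpj j]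
    by_cases hjF : j ∈ F
    · have hgj : Equiv.Perm.sign (g j) = -1 := (Finset.mem_filter.1 hjF).2
      simp [hgj, hjF]
    · have hgj : Equiv.Perm.sign (g j) = 1 := by
        rcases Int.units_eq_one_or (Equiv.Perm.sign (g j)) with h | h
        · exact h
        · exact absurd (Finset.mem_filter.2 ⟨Finset.mem_univ j, h⟩) hjF
      simp [hgj, hjF]
  have hgeq : g = (g * p⁻¹) * p := by group
  rw [hgeq]
  exact H.mul_mem hq hpH

lemma rot_pow_val (m : ℕ) (a : ℕ) :
    (((finRotate (m + 3)) ^ a) (0 : Fin (m + 3))).val = a % (m + 3) := by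
  induction a with
  | zero => simp
  | succ a ih =>
    rw [pow_succ', Equiv.Perm.mul_apply, finRotate_succ_apply, Fin.val_add, ih]
    have h1 : ((1 : Fin (m+3))).val = 1 % (m+3) := by
      simp [Fin.val_one]
    rw [h1]
    exact (Nat.add_mod a 1 (m+3)).symm

lemma odd_case (m : ℕ) (hodd : ¬ 2 ∣ (m + 3)) :
    ∃ u τ : Equiv.Perm (Fin (m + 3)),
      Subgroup.closure ({u, τ} : Set (Equiv.Perm (Fin (m + 3)))) = ⊤ ∧
      τ * τ = 1 ∧ Equiv.Perm.sign τ = -1 ∧ Equiv.Perm.sign u = 1 ∧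
      Equiv.Perm.IsThreeCycle (τ * u ^ 2 * τ⁻¹ * (u ^ 2)⁻¹) := by
  set n := m + 3 with hn
  set c : Equiv.Perm (Fin n) := finRotate n with hc
  set b : Fin n := (c ^ 2) 0 with hb
  set τ : Equiv.Perm (Fin n) := Equiv.swap 0 b with hτ
  -- values
  have hval0 : (0 : Fin n).val = 0 := rfl
  have hvalb : b.val = 2 % n := rot_pow_val m 2
  have hvald : ((c ^ 2) b).val = 4 % n := by
    have : (c ^ 2) b = ((c ^ 2) * (c ^ 2)) 0 := by
      rw [Equiv.Perm.mul_apply, hb]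
    rw [this, ← pow_add]
    exact rot_pow_val m 4
  have h2mod : 2 % n = 2 := Nat.mod_eq_of_lt (by omega)
  have h4mod : 4 % n ≠ 0 ∧ 4 % n ≠ 2 := by
    rcases Nat.lt_or_ge 4 n with h | h
    · rw [Nat.mod_eq_of_lt h]; omega
    · have hm : m = 0 ∨ m = 1 := by omega
      rcases hm with rfl | rfl
      · simp [hn]
      · exact absurd (by norm_num : 2 ∣ (1 + 3)) hodd
  set d : Fin n := (c ^ 2) b with hd
  have hb0 : b ≠ 0 := by
    intro h
    rw [Fin.ext_iff, hvalb, h2mod] at h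
    simp at h
  have hbd : b ≠ d := by
    intro h
    rw [Fin.ext_iff, hvalb, h2mod, hvald] at h
    exact h4mod.2 h.symm
  have h0d : (0 : Fin n) ≠ d := by
    intro h
    rw [Fin.ext_iff, hvald, Fin.val_zero] at h
    exact h4mod.1 h.symm
  have hcyc : (finRotate (m + 3)).IsCycle := isCycle_finRotate (n := m + 1)
  have hsupp : (finRotate (m + 3)).support = Finset.univ := support_finRotate (n := m + 1)
  have hcop : Nat.Coprime 2 (Fintype.card (Fin n)) := by
    rw [Fintype.card_fin]
    exact (Nat.prime_two.coprime_iff_not_dvd).2 hodd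
  refine ⟨c, τ, ?_, Equiv.swap_mul_self _ _, Equiv.Perm.sign_swap (Ne.symm hb0), ?_, ?_⟩
  · exact closure_cycle_coprime_swap hcop hcyc hsupp 0
  · rw [hc]
    show Equiv.Perm.sign (finRotate ((m + 2) + 1)) = 1
    rw [sign_finRotate]
    have hm : Even (m + 2) := by
      rcases Nat.even_or_odd m with h | h
      · exact h.add (by norm_num)
      · exfalso
        apply hodd
        obtain ⟨t, rfl⟩ := h
        omega
    exact Even.neg_one_pow hm
  · have hw : τ * c ^ 2 * τ⁻¹ * (c ^ 2)⁻¹ = Equiv.swap b 0 * Equiv.swap b d := by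
      rw [hτ, Equiv.swap_inv]
      have h1 : Equiv.swap b d = (c ^ 2) * Equiv.swap 0 b * (c ^ 2)⁻¹ := by
        have := Equiv.swap_apply_apply (c ^ 2) (0 : Fin n) b
        rw [← hb, ← hd] at this
        exact this
      rw [Equiv.swap_comm b 0]
      rw [h1]
      group
    rw [hw]
    exact Equiv.Perm.isThreeCycle_swap_mul_swap_same hb0 hbd h0d

lemma even_case (m : ℕ) (heven : 2 ∣ (m + 4)) :
    ∃ u τ : Equiv.Perm (Fin (m + 4)),
      Subgroup.closure ({u, τ} : Set (Equiv.Perm (Fin (m + 4)))) = ⊤ ∧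
      τ * τ = 1 ∧ Equiv.Perm.sign τ = -1 ∧ Equiv.Perm.sign u = 1 ∧
      Equiv.Perm.IsThreeCycle (τ * u ^ 2 * τ⁻¹ * (u ^ 2)⁻¹) := by
  set n := m + 4 with hn
  set c : Equiv.Perm (Fin n) := finRotate n with hc
  have hval1 : (1 : Fin n).val = 1 := by simp [Fin.val_one]; exact Nat.mod_eq_of_lt (by omega)
  have hval2 : (2 : Fin n).val = 2 := by
    show (2 % n) = 2
    exact Nat.mod_eq_of_lt (by omega)
  have hval3 : (3 : Fin n).val = 3 := by
    show (3 % n) = 3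
    exact Nat.mod_eq_of_lt (by omega)
  have h01 : (0 : Fin n) ≠ 1 := by simp [Fin.ext_iff, hval1]
  have h20 : (2 : Fin n) ≠ 0 := by rw [Ne, Fin.ext_iff, hval2]; simp
  have h21 : (2 : Fin n) ≠ 1 := by rw [Ne, Fin.ext_iff, hval2, hval1]; simp
  have h13 : (1 : Fin n) ≠ 3 := by rw [Ne, Fin.ext_iff, hval1, hval3]; simp
  have h03 : (0 : Fin n) ≠ 3 := by rw [Ne, Fin.ext_iff, hval3]; simp
  have hc0 : c 0 = 1 := finRotate_apply_zero
  have hc1 : c 1 = 2 := by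
    rw [hc, finRotate_succ_apply]
    rw [Fin.ext_iff, Fin.val_add, hval1, hval2]
    exact Nat.mod_eq_of_lt (by omega)
  have hc2 : c 2 = 3 := by
    rw [hc, finRotate_succ_apply]
    rw [Fin.ext_iff, Fin.val_add, hval1, hval2, hval3]
    exact Nat.mod_eq_of_lt (by omega)
  set τ : Equiv.Perm (Fin n) := Equiv.swap 0 1 with hτ
  set u : Equiv.Perm (Fin n) := c * τ with hu
  have hu0 : u 0 = 2 := by
    rw [hu, Equiv.Perm.mul_apply, hτ, Equiv.swap_apply_left, hc1]
  have hu1 : u 1 = 1 := by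
    rw [hu, Equiv.Perm.mul_apply, hτ, Equiv.swap_apply_right, hc0]
  have hu2 : u 2 = 3 := by
    rw [hu, Equiv.Perm.mul_apply, hτ, Equiv.swap_apply_of_ne_of_ne h20 h21, hc2]
  have hsq0 : (u ^ 2) 0 = 3 := by
    rw [pow_two, Equiv.Perm.mul_apply, hu0, hu2]
  have hsq1 : (u ^ 2) 1 = 1 := by
    rw [pow_two, Equiv.Perm.mul_apply, hu1, hu1]
  have hcyc : (finRotate (m + 4)).IsCycle := isCycle_finRotate (n := m + 2)
  have hsupp : (finRotate (m + 4)).support = Finset.univ := support_finRotate (n := m + 2)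
  have hbase : Subgroup.closure ({c, τ} : Set (Equiv.Perm (Fin n))) = ⊤ := by
    have := closure_cycle_adjacent_swap hcyc hsupp 0
    rw [← hc, hc0] at this
    exact this
  refine ⟨u, τ, ?_, Equiv.swap_mul_self _ _, Equiv.Perm.sign_swap h01, ?_, ?_⟩
  · rw [eq_top_iff, ← hbase, Subgroup.closure_le]
    rintro s (rfl | rfl)
    · have hcu : c = u * τ := by
        rw [hu, mul_assoc, Equiv.swap_mul_self, mul_one]
      rw [hcu]
      exact Subgroup.mul_mem _ (Subgroup.subset_closure (Set.mem_insert _ _))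
        (Subgroup.subset_closure (Set.mem_insert_of_mem _ rfl))
    · exact Subgroup.subset_closure (Set.mem_insert_of_mem _ rfl)
  · rw [hu, map_mul, hτ, Equiv.Perm.sign_swap h01, hc]
    show Equiv.Perm.sign (finRotate ((m + 3) + 1)) * (-1) = 1
    rw [sign_finRotate]
    have hm : Odd (m + 3) := by
      obtain ⟨t, ht⟩ := heven
      have ht' : m + 4 = 2 * t := ht
      exact ⟨t - 1, by omega⟩
    rw [Nat.add_sub_cancel, Odd.neg_one_pow hm]
    norm_num
  · have h1 : Equiv.swap ((u ^ 2) 0) ((u ^ 2) 1) = (u ^ 2) * Equiv.swap 0 1 * (u ^ 2)⁻¹ :=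
      Equiv.swap_apply_apply (u ^ 2) 0 1
    rw [hsq0, hsq1] at h1
    have key : τ * u ^ 2 * τ⁻¹ * (u ^ 2)⁻¹ = Equiv.swap 0 1 * Equiv.swap 3 1 := by
      rw [h1, hτ, Equiv.swap_inv]
      group
    rw [key, Equiv.swap_comm 0 1, Equiv.swap_comm 3 1]
    exact Equiv.Perm.isThreeCycle_swap_mul_swap_same (Ne.symm h01) h13
      (show (0:Fin n) ≠ 3 from h03)

lemma exists_good (n : ℕ) (hn : 3 ≤ n) :
    ∃ u τ : Equiv.Perm (Fin n),
      Subgroup.closure ({u, τ} : Set (Equiv.Perm (Fin n))) = ⊤ ∧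
      τ * τ = 1 ∧ Equiv.Perm.sign τ = -1 ∧ Equiv.Perm.sign u = 1 ∧
      Equiv.Perm.IsThreeCycle (τ * u ^ 2 * τ⁻¹ * (u ^ 2)⁻¹) := by
  by_cases hpar : 2 ∣ n
  · obtain ⟨m, rfl⟩ : ∃ m, n = m + 4 := ⟨n - 4, by omega⟩
    exact even_case m hpar
  · obtain ⟨m, rfl⟩ : ∃ m, n = m + 3 := ⟨n - 3, by omega⟩
    exact odd_case m hpar

lemma xgen_injective {n k : ℕ} (u τ : Equiv.Perm (Fin n)) (hne : u ≠ τ) :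
    Function.Injective (xgen k u τ) := by
  intro i i' h
  by_contra hii
  have h1 : xgen k u τ i i = τ := if_pos rfl
  have h2 : xgen k u τ i' i = u := if_neg hii
  rw [h] at h1
  rw [h1] at h2
  exact hne h2.symm

end Stmt8Aux

theorem stmt8 (n k : ℕ) (hn : 3 ≤ n) (hk : 2 ≤ k) :
    rk (Fin k → Equiv.Perm (Fin n)) = k := by
  classical
  obtain ⟨u, τ, hgen, hτ2, hsτ, hsu, h3⟩ := Stmt8Aux.exists_good n hn
  have huτ : u ≠ τ := fun h => by
    rw [h, hsτ] at hsu
    exact absurd hsu (by decide)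
  set S : Finset (Fin k → Equiv.Perm (Fin n)) :=
    Finset.image (Stmt8Aux.xgen k u τ) Finset.univ with hS
  have hcard : S.card = k := by
    rw [hS, Finset.card_image_of_injective _ (Stmt8Aux.xgen_injective u τ huτ),
      Finset.card_univ, Fintype.card_fin]
  have hclos : Subgroup.closure (S : Set (Fin k → Equiv.Perm (Fin n))) = ⊤ := by
    rw [hS, Finset.coe_image, Finset.coe_univ, Set.image_univ]
    exact Stmt8Aux.gen_top hk u τ hgen hτ2 hsτ hsu h3
  have hmem : k ∈ {m | ∃ S : Finset (Fin k → Equiv.Perm (Fin n)),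
      S.card = m ∧ Subgroup.closure (S : Set (Fin k → Equiv.Perm (Fin n))) = ⊤} :=
    ⟨S, hcard, hclos⟩
  refine le_antisymm (Nat.sInf_le hmem) ?_
  refine le_csInf ⟨k, hmem⟩ ?_
  rintro b ⟨S', hcard', hgen'⟩
  exact hcard' ▸ Stmt8Aux.lower_bound hn S' hgen'
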